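/- Let G be a connected claw-free graph and let F be the set of edges of G that are not on any triangle. Then in the subgraph of G formed by the edges of F, every vertex that is incident to at least two edges of F has degree exactly 2 in G; consequently, every connected component of this subgraph is a path. -/

import Mathlib

/-- The set of edges of `G` crossing the partition `(R, Rᶜ)`. -/
def crossEdges {V : Type*} (G : SimpleGraph V) (R : Set V) : Set (Sym2 V) :=
  {e | e ∈ G.edgeSet ∧ ∃ u v : V, e = s(u, v) ∧ u ∈ R ∧ v ∉ R}

/-- `M` is a matching contained in the edge set of `G`. -/
def IsMatchingSet {V : Type*} (G : SimpleGraph V) (M : Set (Sym2 V)) : Prop :=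
  M ⊆ G.edgeSet ∧ ∀ e ∈ M, ∀ f ∈ M, e ≠ f → ∀ v : V, v ∈ e → v ∉ f

/-- `M` is a matching cut of `G` with colouring `(R, Rᶜ)`. -/
def IsMatchingCutOn {V : Type*} (G : SimpleGraph V) (R : Set V) (M : Set (Sym2 V)) : Prop :=
  R.Nonempty ∧ Rᶜ.Nonempty ∧ M = crossEdges G R ∧ IsMatchingSet G M

/-- `M` is a matching cut of `G`. -/
def IsMatchingCut {V : Type*} (G : SimpleGraph V) (M : Set (Sym2 V)) : Prop :=
  ∃ R : Set V, IsMatchingCutOn G R M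


open SimpleGraph

/-- first edge of a non-nil walk -/
lemma first_edge_mem {V : Type*} {H : SimpleGraph V} {u v : V} (r : H.Walk u v)
    (h : ¬ r.Nil) : s(u, r.getVert 1) ∈ r.edges := by
  cases r with
  | nil => simp at h
  | cons hadj q =>
    simp [SimpleGraph.Walk.getVert_cons_succ]

lemma cycle_two_edges {V : Type*} {H : SimpleGraph V} {u : V} (q : H.Walk u u)
    (hq : q.IsCycle) : ∃ a b : V, a ≠ b ∧ s(u, a) ∈ q.edges ∧ s(u, b) ∈ q.edges := by
  cases q with
  | nil => exact absurd hq (SimpleGraph.Walk.IsCycle.not_of_nil)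
  | @cons _ x _ hadj q₁ =>
    rw [SimpleGraph.Walk.cons_isCycle_iff] at hq
    obtain ⟨hpath, hnot⟩ := hq
    have hxu : x ≠ u := fun h => H.irrefl (h ▸ hadj)
    have hnn : ¬ q₁.reverse.Nil := by
      rw [SimpleGraph.Walk.nil_iff_length_eq]
      simp only [SimpleGraph.Walk.length_reverse]
      intro h
      exact hxu (by simpa using (SimpleGraph.Walk.nil_iff_length_eq.mpr h).eq ▸ rfl)
    have hb : ∃ b, b = q₁.reverse.getVert 1 := ⟨_, rfl⟩
    obtain ⟨b, hb⟩ := hb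
    have hmem : s(u, b) ∈ q₁.reverse.edges := hb ▸ first_edge_mem _ hnn
    have hmem' : s(u, b) ∈ q₁.edges := by
      rwa [SimpleGraph.Walk.edges_reverse, List.mem_reverse] at hmem
    refine ⟨x, b, ?_, by simp, List.mem_cons_of_mem _ hmem'⟩
    intro hxb
    exact hnot (hxb ▸ hmem')

/-- In a connected claw-free graph that is not a cycle, with F the set of
edges not on any triangle: every vertex incident to at least two edges of F
has degree exactly 2 in G; consequently every component of G[F] is a path
(equivalently, G[F] is acyclic with maximum degree at most 2). -/
theorem stmt_10 {V : Type*} [Fintype V] (G : SimpleGraph V) (hconn : G.Connected)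
    (hclawfree : ∀ v a b c : V, G.Adj v a → G.Adj v b → G.Adj v c →
      a ≠ b → a ≠ c → b ≠ c → (G.Adj a b ∨ G.Adj a c ∨ G.Adj b c))
    (hnotcycle : ¬ ∀ v : V, (G.neighborSet v).ncard = 2)
    (F : Set (Sym2 V))
    (hF : F = {e | e ∈ G.edgeSet ∧
      ∀ u v : V, e = s(u, v) → ¬ ∃ w : V, G.Adj u w ∧ G.Adj v w}) :
    (∀ v : V, 2 ≤ {w : V | s(v, w) ∈ F}.ncard → (G.neighborSet v).ncard = 2) ∧
    (∀ v : V, {w : V | s(v, w) ∈ F}.ncard ≤ 2) ∧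
    (SimpleGraph.fromEdgeSet F).IsAcyclic := by
  classical
  -- basic facts about F
  have hFadj : ∀ {u w : V}, s(u, w) ∈ F → G.Adj u w := by
    intro u w h
    rw [hF] at h
    exact G.mem_edgeSet.mp h.1
  have hFtri : ∀ {u w : V}, s(u, w) ∈ F → ∀ x : V, ¬ (G.Adj u x ∧ G.Adj w x) := by
    intro u w h x hx
    rw [hF] at h
    exact h.2 u w rfl ⟨x, hx⟩
  -- key lemma A
  have keyA : ∀ u a b : V, a ≠ b → s(u, a) ∈ F → s(u, b) ∈ F →
      G.neighborSet u = {a, b} := by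
    intro u a b hab ha hb
    have hua := hFadj ha
    have hub := hFadj hb
    ext c
    simp only [SimpleGraph.mem_neighborSet, Set.mem_insert_iff, Set.mem_singleton_iff]
    constructor
    · intro huc
      by_contra hc
      push_neg at hc
      obtain ⟨hca, hcb⟩ := hc
      rcases hclawfree u a b c hua hub huc hab (Ne.symm hca) (Ne.symm hcb) with h | h | h
      · exact hFtri ha b ⟨hub, h⟩
      · exact hFtri ha c ⟨huc, h⟩
      · exact hFtri hb c ⟨huc, h⟩
    · rintro (rfl | rfl) <;> assumption
  have part1 : ∀ v : V, 2 ≤ {w : V | s(v, w) ∈ F}.ncard → (G.neighborSet v).ncard = 2 := by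
    intro v hv
    have hfin : {w : V | s(v, w) ∈ F}.Finite := Set.toFinite _
    obtain ⟨a, b, ha, hb, hab⟩ := (Set.one_lt_ncard_iff hfin).mp hv
    rw [keyA v a b hab ha hb, Set.ncard_pair hab]
  refine ⟨part1, ?_, ?_⟩
  · intro v
    by_contra h
    push_neg at h
    have h2 : 2 ≤ {w : V | s(v, w) ∈ F}.ncard := by omega
    have := part1 v h2
    have hsub : {w : V | s(v, w) ∈ F} ⊆ G.neighborSet v := fun w hw => hFadj hw
    have := Set.ncard_le_ncard hsub (Set.toFinite _)
    omega
  · -- acyclic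
    intro z0 p hp
    have hdeg : ∀ u ∈ p.support, ∃ a b : V, a ≠ b ∧ s(u, a) ∈ F ∧ s(u, b) ∈ F ∧
        a ∈ p.support ∧ b ∈ p.support := by
      intro u hu
      obtain ⟨a, b, hab, ha, hb⟩ := cycle_two_edges (p.rotate u hu) (hp.rotate hu)
      have hrot := (p.rotate_edges u hu)
      have ha' : s(u, a) ∈ p.edges := hrot.mem_iff.mp ha
      have hb' : s(u, b) ∈ p.edges := hrot.mem_iff.mp hb
      have haF : s(u, a) ∈ F := by
        have := p.edges_subset_edgeSet ha'
        rw [SimpleGraph.edgeSet_fromEdgeSet] at this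
        exact this.1
      have hbF : s(u, b) ∈ F := by
        have := p.edges_subset_edgeSet hb'
        rw [SimpleGraph.edgeSet_fromEdgeSet] at this
        exact this.1
      exact ⟨a, b, hab, haF, hbF, p.snd_mem_support_of_mem_edges ha',
        p.snd_mem_support_of_mem_edges hb'⟩
    -- every vertex in support has neighborSet contained in support
    have hclosed : ∀ u ∈ p.support, ∀ y : V, G.Adj u y → y ∈ p.support := by
      intro u hu y hy
      obtain ⟨a, b, hab, ha, hb, haS, hbS⟩ := hdeg u hu
      have := keyA u a b hab ha hb
      have hy' : y ∈ G.neighborSet u := hy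
      rw [this] at hy'
      rcases hy' with rfl | rfl <;> assumption
    have hwalk : ∀ {a b : V} (w : G.Walk a b), a ∈ p.support → b ∈ p.support := by
      intro a b w
      induction w with
      | nil => exact id
      | cons h q ih => exact fun ha => ih (hclosed _ ha _ h)
    have hall : ∀ x : V, x ∈ p.support := by
      intro x
      obtain ⟨w⟩ := hconn.preconnected z0 x
      exact hwalk w p.start_mem_support
    apply hnotcycle
    intro x
    obtain ⟨a, b, hab, ha, hb, _, _⟩ := hdeg x (hall x)
    rw [keyA x a b hab ha hb, Set.ncard_pair hab]
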